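/- Let 𝕋 = [−1/2, 1/2] ⊂ ℝ. Let 0 < s < 1 and let p satisfy 1 < p < 2 and p − s > 1. Let C₀ > 0 and let K : ℕ³ × 𝕋³ → ℂ be measurable with |K(n,j₁,j₂,k,k₁,k₂)| ≤ C₀ (1 + |n − j₁ − j₂|)^(−p) for all n, j₁, j₂ ∈ ℕ and all k, k₁, k₂ ∈ 𝕋. Then there exists C > 0 such that for all families φ, ψ : ℕ → L¹(𝕋; ℂ) with ‖φ‖ = Σ_{n∈ℕ} (1+n)^s ∫_𝕋 |φₙ(k)| dk < ∞ and ‖ψ‖ < ∞ (same norm), the family defined by (φ ⋆ ψ)ₙ(k) = Σ_{j₁∈ℕ} Σ_{j₂∈ℕ} ∫_𝕋 ∫_𝕋 K(n,j₁,j₂,k,k₁,k₂) φ_{j₁}(k₁) ψ_{j₂}(k₂) dk₁ dk₂ satisfies ‖φ ⋆ ψ‖ ≤ C ‖φ‖ ‖ψ‖. -/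

import Mathlib

open MeasureTheory

lemma aux_shift (f : ℕ → ℝ) (hf0 : ∀ m, 0 ≤ f m) (hf : Summable f) (m₀ : ℕ) :
    Summable (fun n : ℕ => f ((n : ℤ) - m₀).natAbs) ∧
      ∑' n : ℕ, f ((n : ℤ) - m₀).natAbs ≤ 2 * ∑' m, f m := by
  have key : ∀ N : ℕ, ∑ n ∈ Finset.range N, f ((n : ℤ) - m₀).natAbs ≤ 2 * ∑' m, f m := by
    intro N
    rw [← Finset.sum_filter_add_sum_filter_not (Finset.range N) (fun n => n < m₀)
      (fun n => f ((n : ℤ) - m₀).natAbs), two_mul]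
    have h1 : ∑ n ∈ (Finset.range N).filter (fun n => n < m₀),
        f ((n : ℤ) - m₀).natAbs ≤ ∑' m, f m := by
      rw [← Finset.sum_image (g := fun n : ℕ => ((n : ℤ) - m₀).natAbs)
        (f := f) (fun x hx y hy hxy => by
          simp only [Finset.mem_coe, Finset.mem_filter, Finset.mem_range] at hx hy
          simp only at hxy; omega)]
      exact Summable.sum_le_tsum _ (fun i _ => hf0 i) hf
    have h2 : ∑ n ∈ (Finset.range N).filter (fun n => ¬ n < m₀),
        f ((n : ℤ) - m₀).natAbs ≤ ∑' m, f m := by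
      rw [← Finset.sum_image (g := fun n : ℕ => ((n : ℤ) - m₀).natAbs)
        (f := f) (fun x hx y hy hxy => by
          simp only [Finset.mem_coe, Finset.mem_filter, Finset.mem_range] at hx hy
          simp only at hxy; omega)]
      exact Summable.sum_le_tsum _ (fun i _ => hf0 i) hf
    linarith
  have hnn : ∀ n : ℕ, 0 ≤ f ((n : ℤ) - m₀).natAbs := fun n => hf0 _
  have hsum := summable_of_sum_range_le hnn key
  exact ⟨hsum, Summable.tsum_le_of_sum_range_le hsum key⟩

/-- Banach-algebra type estimate in the space `l¹ₛ(ℕ, L¹(𝕋))`, with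
`𝕋 = [-1/2, 1/2]`, for the convolution with a kernel `K(n,j₁,j₂;k,k₁,k₂)` bounded by
`C₀ (1 + |n - j₁ - j₂|)^(-p)`. -/
theorem l1s_L1_kernel_convolution_estimate
    (s p C₀ : ℝ) (hs0 : 0 < s) (hs1 : s < 1)
    (hp1 : 1 < p) (hp2 : p < 2) (hps : 1 < p - s) (hC₀ : 0 < C₀)
    (K : ℕ → ℕ → ℕ → ℝ → ℝ → ℝ → ℂ)
    (hKmeas : ∀ n j₁ j₂ : ℕ, Measurable (fun x : ℝ × ℝ × ℝ => K n j₁ j₂ x.1 x.2.1 x.2.2))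
    (hK : ∀ (n j₁ j₂ : ℕ) (k k₁ k₂ : ℝ),
      k ∈ Set.Icc (-(1/2) : ℝ) (1/2) → k₁ ∈ Set.Icc (-(1/2) : ℝ) (1/2) →
      k₂ ∈ Set.Icc (-(1/2) : ℝ) (1/2) →
      ‖K n j₁ j₂ k k₁ k₂‖ ≤ C₀ * (1 + |(n : ℤ) - j₁ - j₂| : ℝ) ^ (-p)) :
    ∃ C > 0, ∀ φ ψ : ℕ → ℝ → ℂ,
      (∀ n : ℕ, IntegrableOn (φ n) (Set.Icc (-(1/2) : ℝ) (1/2))) →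
      (∀ n : ℕ, IntegrableOn (ψ n) (Set.Icc (-(1/2) : ℝ) (1/2))) →
      Summable (fun n : ℕ => (1 + n : ℝ) ^ s * ∫ k in Set.Icc (-(1/2) : ℝ) (1/2), ‖φ n k‖) →
      Summable (fun n : ℕ => (1 + n : ℝ) ^ s * ∫ k in Set.Icc (-(1/2) : ℝ) (1/2), ‖ψ n k‖) →
      Summable (fun n : ℕ => (1 + n : ℝ) ^ s * ∫ k in Set.Icc (-(1/2) : ℝ) (1/2),
        ‖∑' j : ℕ × ℕ, ∫ k₁ in Set.Icc (-(1/2) : ℝ) (1/2),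
          ∫ k₂ in Set.Icc (-(1/2) : ℝ) (1/2), K n j.1 j.2 k k₁ k₂ * φ j.1 k₁ * ψ j.2 k₂‖) ∧
      (∑' n : ℕ, (1 + n : ℝ) ^ s * ∫ k in Set.Icc (-(1/2) : ℝ) (1/2),
        ‖∑' j : ℕ × ℕ, ∫ k₁ in Set.Icc (-(1/2) : ℝ) (1/2),
          ∫ k₂ in Set.Icc (-(1/2) : ℝ) (1/2), K n j.1 j.2 k k₁ k₂ * φ j.1 k₁ * ψ j.2 k₂‖) ≤
        C * (∑' n : ℕ, (1 + n : ℝ) ^ s * ∫ k in Set.Icc (-(1/2) : ℝ) (1/2), ‖φ n k‖) *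
          (∑' n : ℕ, (1 + n : ℝ) ^ s * ∫ k in Set.Icc (-(1/2) : ℝ) (1/2), ‖ψ n k‖) := by
  have hvolT : volume (Set.Icc (-(1/2) : ℝ) (1/2)) = 1 := by
    rw [Real.volume_Icc]; norm_num
  -- the decaying weight
  set f : ℕ → ℝ := fun m => (1 + m : ℝ) ^ (s - p) with hfdef
  have hf0 : ∀ m, 0 ≤ f m := fun m => Real.rpow_nonneg (by positivity) _
  have hfs : Summable f := by
    have h0 : Summable (fun n : ℕ => (n : ℝ) ^ (s - p)) :=
      Real.summable_nat_rpow.2 (by linarith)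
    have h1 := (summable_nat_add_iff 1).2 h0
    refine h1.congr fun n => ?_
    simp only [hfdef]
    push_cast
    ring_nf
  set S : ℝ := ∑' m, f m with hSdef
  have hS1 : (1 : ℝ) ≤ S := by
    have h := Summable.le_tsum hfs 0 (fun j _ => hf0 j)
    simpa [hfdef, Real.one_rpow] using h
  have hSpos : (0 : ℝ) < S := by linarith
  refine ⟨C₀ * (2 * S), by positivity, ?_⟩
  intro φ ψ hφ hψ ha hb
  set A : ℕ → ℝ := fun j => ∫ k in Set.Icc (-(1/2) : ℝ) (1/2), ‖φ j k‖ with hAdef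
  set B : ℕ → ℝ := fun j => ∫ k in Set.Icc (-(1/2) : ℝ) (1/2), ‖ψ j k‖ with hBdef
  have hA0 : ∀ j, 0 ≤ A j := fun j => integral_nonneg (fun _ => norm_nonneg _)
  have hB0 : ∀ j, 0 ≤ B j := fun j => integral_nonneg (fun _ => norm_nonneg _)
  set a : ℕ → ℝ := fun n => (1 + n : ℝ) ^ s * A n with hadef
  set b : ℕ → ℝ := fun n => (1 + n : ℝ) ^ s * B n with hbdef
  have hone_le : ∀ n : ℕ, (1 : ℝ) ≤ (1 + n : ℝ) ^ s :=
    fun n => Real.one_le_rpow (by have := Nat.cast_nonneg (α := ℝ) n; linarith) hs0.le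
  have ha0 : ∀ n, 0 ≤ a n := fun n => mul_nonneg (by positivity) (hA0 n)
  have hb0 : ∀ n, 0 ≤ b n := fun n => mul_nonneg (by positivity) (hB0 n)
  have ha' : Summable a := ha
  have hb' : Summable b := hb
  have hAs : Summable A := Summable.of_nonneg_of_le hA0
    (fun n => by simp only [hadef]; nlinarith [hone_le n, hA0 n]) ha'
  have hBs : Summable B := Summable.of_nonneg_of_le hB0
    (fun n => by simp only [hbdef]; nlinarith [hone_le n, hB0 n]) hb'
  set w : ℕ → ℕ → ℕ → ℝ := fun n j₁ j₂ => (1 + |(n : ℤ) - j₁ - j₂| : ℝ) ^ (-p) with hwdef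
  have hw0 : ∀ n j₁ j₂, 0 ≤ w n j₁ j₂ := fun n j₁ j₂ => Real.rpow_nonneg (by positivity) _
  have hw1 : ∀ n j₁ j₂, w n j₁ j₂ ≤ 1 := fun n j₁ j₂ =>
    Real.rpow_le_one_of_one_le_of_nonpos
      (by have : (0:ℝ) ≤ ((|(n : ℤ) - j₁ - j₂| : ℤ) : ℝ) := by exact_mod_cast abs_nonneg _
          linarith) (by linarith)
  -- Step 1 : pointwise bound on each double integral
  have step1 : ∀ (n j₁ j₂ : ℕ) (k : ℝ), k ∈ Set.Icc (-(1/2) : ℝ) (1/2) →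
      ‖∫ k₁ in Set.Icc (-(1/2) : ℝ) (1/2), ∫ k₂ in Set.Icc (-(1/2) : ℝ) (1/2),
        K n j₁ j₂ k k₁ k₂ * φ j₁ k₁ * ψ j₂ k₂‖ ≤ C₀ * w n j₁ j₂ * A j₁ * B j₂ := by
    intro n j₁ j₂ k hk
    have hg : Integrable (fun k₁ => C₀ * w n j₁ j₂ * ‖φ j₁ k₁‖ * B j₂)
        (volume.restrict (Set.Icc (-(1/2) : ℝ) (1/2))) :=
      ((hφ j₁).norm.const_mul (C₀ * w n j₁ j₂)).mul_const (B j₂)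
    refine le_trans (norm_integral_le_of_norm_le hg ?_) ?_
    · filter_upwards [ae_restrict_mem measurableSet_Icc] with k₁ hk₁
      have hg2 : Integrable (fun k₂ => C₀ * w n j₁ j₂ * ‖φ j₁ k₁‖ * ‖ψ j₂ k₂‖)
          (volume.restrict (Set.Icc (-(1/2) : ℝ) (1/2))) :=
        (hψ j₂).norm.const_mul (C₀ * w n j₁ j₂ * ‖φ j₁ k₁‖)
      refine le_trans (norm_integral_le_of_norm_le hg2 ?_) ?_
      · filter_upwards [ae_restrict_mem measurableSet_Icc] with k₂ hk₂
        rw [norm_mul, norm_mul]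
        have h1 := hK n j₁ j₂ k k₁ k₂ hk hk₁ hk₂
        have h2 : ‖K n j₁ j₂ k k₁ k₂‖ ≤ C₀ * w n j₁ j₂ := by rw [hwdef]; exact h1
        exact mul_le_mul_of_nonneg_right
          (mul_le_mul_of_nonneg_right h2 (norm_nonneg _)) (norm_nonneg _)
      · rw [integral_const_mul]
    · rw [integral_mul_const, integral_const_mul]
  -- summability of the dominating families
  have hABsum : Summable (fun j : ℕ × ℕ => A j.1 * B j.2) :=
    hAs.mul_of_nonneg hBs hA0 hB0
  have habsum : Summable (fun j : ℕ × ℕ => a j.1 * b j.2) :=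
    ha'.mul_of_nonneg hb' ha0 hb0
  have hFs : ∀ n : ℕ, Summable (fun j : ℕ × ℕ => C₀ * w n j.1 j.2 * A j.1 * B j.2) := by
    intro n
    refine Summable.of_nonneg_of_le
      (fun j => mul_nonneg (mul_nonneg (mul_nonneg hC₀.le (hw0 _ _ _)) (hA0 _)) (hB0 _))
      (fun j => ?_) (hABsum.mul_left C₀)
    calc C₀ * w n j.1 j.2 * A j.1 * B j.2
        ≤ C₀ * 1 * A j.1 * B j.2 := by
          exact mul_le_mul_of_nonneg_right (mul_le_mul_of_nonneg_right
            (mul_le_mul_of_nonneg_left (hw1 n j.1 j.2) hC₀.le) (hA0 _)) (hB0 _)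
      _ = C₀ * (A j.1 * B j.2) := by ring
  have hF0 : ∀ n : ℕ, (0 : ℝ) ≤ ∑' j : ℕ × ℕ, C₀ * w n j.1 j.2 * A j.1 * B j.2 :=
    fun n => tsum_nonneg fun j =>
      mul_nonneg (mul_nonneg (mul_nonneg hC₀.le (hw0 _ _ _)) (hA0 _)) (hB0 _)
  -- Step 2 : pointwise bound on the tsum
  have step2 : ∀ (n : ℕ) (k : ℝ), k ∈ Set.Icc (-(1/2) : ℝ) (1/2) →
      ‖∑' j : ℕ × ℕ, ∫ k₁ in Set.Icc (-(1/2) : ℝ) (1/2),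
        ∫ k₂ in Set.Icc (-(1/2) : ℝ) (1/2), K n j.1 j.2 k k₁ k₂ * φ j.1 k₁ * ψ j.2 k₂‖
        ≤ ∑' j : ℕ × ℕ, C₀ * w n j.1 j.2 * A j.1 * B j.2 := by
    intro n k hk
    have hnorms : Summable (fun j : ℕ × ℕ =>
        ‖∫ k₁ in Set.Icc (-(1/2) : ℝ) (1/2), ∫ k₂ in Set.Icc (-(1/2) : ℝ) (1/2),
          K n j.1 j.2 k k₁ k₂ * φ j.1 k₁ * ψ j.2 k₂‖) :=
      Summable.of_nonneg_of_le (fun j => norm_nonneg _)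
        (fun j => step1 n j.1 j.2 k hk) (hFs n)
    exact (norm_tsum_le_tsum_norm hnorms).trans
      (Summable.tsum_le_tsum (fun j => step1 n j.1 j.2 k hk) hnorms (hFs n))
  -- Step 3 : integrate over k
  have step3 : ∀ n : ℕ,
      (∫ k in Set.Icc (-(1/2) : ℝ) (1/2),
        ‖∑' j : ℕ × ℕ, ∫ k₁ in Set.Icc (-(1/2) : ℝ) (1/2),
          ∫ k₂ in Set.Icc (-(1/2) : ℝ) (1/2), K n j.1 j.2 k k₁ k₂ * φ j.1 k₁ * ψ j.2 k₂‖)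
        ≤ ∑' j : ℕ × ℕ, C₀ * w n j.1 j.2 * A j.1 * B j.2 := by
    intro n
    by_cases hint : IntegrableOn (fun k : ℝ =>
        ‖∑' j : ℕ × ℕ, ∫ k₁ in Set.Icc (-(1/2) : ℝ) (1/2),
          ∫ k₂ in Set.Icc (-(1/2) : ℝ) (1/2), K n j.1 j.2 k k₁ k₂ * φ j.1 k₁ * ψ j.2 k₂‖)
        (Set.Icc (-(1/2) : ℝ) (1/2)) volume
    · have hconst : IntegrableOn (fun _ : ℝ =>
          ∑' j : ℕ × ℕ, C₀ * w n j.1 j.2 * A j.1 * B j.2)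
          (Set.Icc (-(1/2) : ℝ) (1/2)) volume := by
        refine integrableOn_const ?_ (by simp)
        rw [hvolT]; exact ENNReal.one_ne_top
      have h := setIntegral_mono_on hint hconst measurableSet_Icc (fun k hk => step2 n k hk)
      refine h.trans (le_of_eq ?_)
      rw [setIntegral_const, measureReal_def, hvolT]
      simp
    · rw [integral_undef hint]
      exact hF0 n
  -- Step 4 : the weighted comparison
  set P : ℕ → ℕ × ℕ → ℝ :=
    fun n j => C₀ * a j.1 * b j.2 * f ((n : ℤ) - j.1 - j.2).natAbs with hPdef
  have hP0 : ∀ n j, 0 ≤ P n j := fun n j =>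
    mul_nonneg (mul_nonneg (mul_nonneg hC₀.le (ha0 _)) (hb0 _)) (hf0 _)
  have hterm : ∀ (n : ℕ) (j : ℕ × ℕ),
      (1 + n : ℝ) ^ s * (C₀ * w n j.1 j.2 * A j.1 * B j.2) ≤ P n j := by
    rintro n ⟨j₁, j₂⟩
    set d : ℕ := ((n : ℤ) - j₁ - j₂).natAbs with hddef
    have hnR : (1 + (n : ℝ)) ≤ (1 + (d : ℝ)) * (1 + (j₁ : ℝ)) * (1 + (j₂ : ℝ)) := by
      have h1 : n ≤ d + j₁ + j₂ := by omega
      have h1R : (n : ℝ) ≤ (d : ℝ) + (j₁ : ℝ) + (j₂ : ℝ) := by exact_mod_cast h1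
      have hd0 : (0:ℝ) ≤ (d : ℝ) := Nat.cast_nonneg d
      have hj10 : (0:ℝ) ≤ (j₁ : ℝ) := Nat.cast_nonneg j₁
      have hj20 : (0:ℝ) ≤ (j₂ : ℝ) := Nat.cast_nonneg j₂
      nlinarith [mul_nonneg hd0 hj10, mul_nonneg hj10 hj20, mul_nonneg hd0 hj20,
        mul_nonneg (mul_nonneg hd0 hj10) hj20]
    have hcast : ((|(n : ℤ) - j₁ - j₂| : ℤ) : ℝ) = (d : ℝ) := by
      rw [Int.abs_eq_natAbs, ← hddef]; push_cast; ring
    have e1 : (1 + (n : ℝ)) ^ s ≤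
        (1 + (d : ℝ)) ^ s * (1 + (j₁ : ℝ)) ^ s * (1 + (j₂ : ℝ)) ^ s := by
      have := Real.rpow_le_rpow (by positivity) hnR hs0.le
      rwa [Real.mul_rpow (by positivity) (by positivity),
        Real.mul_rpow (by positivity) (by positivity)] at this
    have e2 : w n j₁ j₂ = (1 + (d : ℝ)) ^ (-p) := by
      rw [hwdef]; simp only []; rw [hcast]
    have hkey : (1 + (n : ℝ)) ^ s * w n j₁ j₂ ≤
        f d * (1 + (j₁ : ℝ)) ^ s * (1 + (j₂ : ℝ)) ^ s := by
      calc (1 + (n : ℝ)) ^ s * w n j₁ j₂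
          ≤ ((1 + (d : ℝ)) ^ s * (1 + (j₁ : ℝ)) ^ s * (1 + (j₂ : ℝ)) ^ s)
              * (1 + (d : ℝ)) ^ (-p) := by
            rw [e2]
            exact mul_le_mul_of_nonneg_right e1 (Real.rpow_nonneg (by positivity) _)
        _ = ((1 + (d : ℝ)) ^ s * (1 + (d : ℝ)) ^ (-p))
              * ((1 + (j₁ : ℝ)) ^ s * (1 + (j₂ : ℝ)) ^ s) := by ring
        _ = f d * ((1 + (j₁ : ℝ)) ^ s * (1 + (j₂ : ℝ)) ^ s) := by
            rw [← Real.rpow_add (by positivity : (0:ℝ) < 1 + (d : ℝ)), ← sub_eq_add_neg]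
        _ = f d * (1 + (j₁ : ℝ)) ^ s * (1 + (j₂ : ℝ)) ^ s := by ring
    calc (1 + n : ℝ) ^ s * (C₀ * w n j₁ j₂ * A j₁ * B j₂)
        = C₀ * ((1 + (n : ℝ)) ^ s * w n j₁ j₂) * A j₁ * B j₂ := by ring
      _ ≤ C₀ * (f d * (1 + (j₁ : ℝ)) ^ s * (1 + (j₂ : ℝ)) ^ s) * A j₁ * B j₂ := by
          exact mul_le_mul_of_nonneg_right (mul_le_mul_of_nonneg_right
            (mul_le_mul_of_nonneg_left hkey hC₀.le) (hA0 _)) (hB0 _)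
      _ = P n (j₁, j₂) := by
          simp only [hPdef, hadef, hbdef, ← hddef]; ring
  have hPs : ∀ n : ℕ, Summable (P n) := by
    intro n
    refine Summable.of_nonneg_of_le (hP0 n) (fun j => ?_) (habsum.mul_left C₀)
    have hfle : f ((n : ℤ) - j.1 - j.2).natAbs ≤ 1 :=
      Real.rpow_le_one_of_one_le_of_nonpos
        (by have : (0:ℝ) ≤ ((((n : ℤ) - j.1 - j.2).natAbs : ℕ) : ℝ) := Nat.cast_nonneg _
            linarith) (by linarith)
    calc P n j = C₀ * a j.1 * b j.2 * f ((n : ℤ) - j.1 - j.2).natAbs := rfl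
      _ ≤ C₀ * a j.1 * b j.2 * 1 := by
          exact mul_le_mul_of_nonneg_left hfle
            (mul_nonneg (mul_nonneg hC₀.le (ha0 _)) (hb0 _))
      _ = C₀ * (a j.1 * b j.2) := by ring
  have hshift : ∀ j : ℕ × ℕ, Summable (fun n : ℕ => P n j) ∧
      ∑' n : ℕ, P n j ≤ C₀ * (2 * S) * (a j.1 * b j.2) := by
    intro j
    have harg : ∀ n : ℕ, ((n : ℤ) - j.1 - j.2).natAbs
        = ((n : ℤ) - ((j.1 + j.2 : ℕ) : ℤ)).natAbs := fun n => by omega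
    obtain ⟨hs', hle⟩ := aux_shift f hf0 hfs (j.1 + j.2)
    have heq : ∀ n : ℕ, (C₀ * a j.1 * b j.2) * f ((n : ℤ) - ((j.1 + j.2 : ℕ) : ℤ)).natAbs
        = P n j := fun n => by simp only [hPdef]; rw [harg n]
    constructor
    · exact (hs'.mul_left (C₀ * a j.1 * b j.2)).congr heq
    · calc ∑' n : ℕ, P n j
          = (C₀ * a j.1 * b j.2) * ∑' n : ℕ, f ((n : ℤ) - ((j.1 + j.2 : ℕ) : ℤ)).natAbs := by
            rw [← tsum_mul_left]
            exact tsum_congr fun n => (heq n).symm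
        _ ≤ (C₀ * a j.1 * b j.2) * (2 * S) :=
            mul_le_mul_of_nonneg_left hle
              (mul_nonneg (mul_nonneg hC₀.le (ha0 _)) (hb0 _))
        _ = C₀ * (2 * S) * (a j.1 * b j.2) := by ring
  have hRs : Summable (fun j : ℕ × ℕ => ∑' n : ℕ, P n j) :=
    Summable.of_nonneg_of_le (fun j => tsum_nonneg fun n => hP0 n j)
      (fun j => (hshift j).2) (habsum.mul_left (C₀ * (2 * S)))
  have hP' : Summable (fun x : (ℕ × ℕ) × ℕ => P x.2 x.1) :=
    (summable_prod_of_nonneg (fun x => hP0 x.2 x.1)).2 ⟨fun j => (hshift j).1, hRs⟩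
  have hP'' : Summable (fun x : ℕ × (ℕ × ℕ) => P x.1 x.2) := hP'.prod_symm
  have hQs : Summable (fun n : ℕ => ∑' j : ℕ × ℕ, P n j) :=
    ((summable_prod_of_nonneg (fun x => hP0 x.1 x.2)).1 hP'').2
  have hswap : ∑' n : ℕ, ∑' j : ℕ × ℕ, P n j = ∑' j : ℕ × ℕ, ∑' n : ℕ, P n j := by
    rw [← Summable.tsum_prod' hP'' (fun n => hPs n), ← Summable.tsum_prod' hP' (fun j => (hshift j).1)]
    have heqv := Equiv.tsum_eq (Equiv.prodComm ℕ (ℕ × ℕ)) (fun x : (ℕ × ℕ) × ℕ => P x.2 x.1)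
    simp only [Equiv.prodComm_apply, Prod.snd_swap, Prod.fst_swap] at heqv
    exact heqv
  have hprod_eq : ∑' j : ℕ × ℕ, a j.1 * b j.2 = (∑' n, a n) * (∑' n, b n) := by
    rw [Summable.tsum_prod' habsum (fun j₁ => hb'.mul_left (a j₁))]
    calc ∑' j₁, ∑' j₂, a j₁ * b j₂ = ∑' j₁, a j₁ * ∑' j₂, b j₂ :=
          tsum_congr fun j₁ => tsum_mul_left
      _ = (∑' n, a n) * (∑' n, b n) := tsum_mul_right
  have hQle : ∑' n : ℕ, ∑' j : ℕ × ℕ, P n j ≤ C₀ * (2 * S) * ((∑' n, a n) * (∑' n, b n)) := by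
    rw [hswap]
    calc ∑' j : ℕ × ℕ, ∑' n : ℕ, P n j
        ≤ ∑' j : ℕ × ℕ, C₀ * (2 * S) * (a j.1 * b j.2) :=
          Summable.tsum_le_tsum (fun j => (hshift j).2) hRs (habsum.mul_left _)
      _ = C₀ * (2 * S) * ∑' j : ℕ × ℕ, a j.1 * b j.2 := tsum_mul_left
      _ = C₀ * (2 * S) * ((∑' n, a n) * (∑' n, b n)) := by rw [hprod_eq]
  -- assemble
  have hG0 : ∀ n : ℕ, 0 ≤ (1 + n : ℝ) ^ s * ∫ k in Set.Icc (-(1/2) : ℝ) (1/2),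
      ‖∑' j : ℕ × ℕ, ∫ k₁ in Set.Icc (-(1/2) : ℝ) (1/2),
        ∫ k₂ in Set.Icc (-(1/2) : ℝ) (1/2), K n j.1 j.2 k k₁ k₂ * φ j.1 k₁ * ψ j.2 k₂‖ :=
    fun n => mul_nonneg (by positivity) (integral_nonneg fun _ => norm_nonneg _)
  have hGle : ∀ n : ℕ, (1 + n : ℝ) ^ s * (∫ k in Set.Icc (-(1/2) : ℝ) (1/2),
      ‖∑' j : ℕ × ℕ, ∫ k₁ in Set.Icc (-(1/2) : ℝ) (1/2),
        ∫ k₂ in Set.Icc (-(1/2) : ℝ) (1/2), K n j.1 j.2 k k₁ k₂ * φ j.1 k₁ * ψ j.2 k₂‖)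
      ≤ ∑' j : ℕ × ℕ, P n j := by
    intro n
    calc (1 + n : ℝ) ^ s * (∫ k in Set.Icc (-(1/2) : ℝ) (1/2),
        ‖∑' j : ℕ × ℕ, ∫ k₁ in Set.Icc (-(1/2) : ℝ) (1/2),
          ∫ k₂ in Set.Icc (-(1/2) : ℝ) (1/2), K n j.1 j.2 k k₁ k₂ * φ j.1 k₁ * ψ j.2 k₂‖)
        ≤ (1 + n : ℝ) ^ s * ∑' j : ℕ × ℕ, C₀ * w n j.1 j.2 * A j.1 * B j.2 :=
          mul_le_mul_of_nonneg_left (step3 n) (by positivity)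
      _ = ∑' j : ℕ × ℕ, (1 + n : ℝ) ^ s * (C₀ * w n j.1 j.2 * A j.1 * B j.2) :=
          tsum_mul_left.symm
      _ ≤ ∑' j : ℕ × ℕ, P n j :=
          Summable.tsum_le_tsum (hterm n) ((hFs n).mul_left _) (hPs n)
  have hGsum : Summable (fun n : ℕ => (1 + n : ℝ) ^ s * ∫ k in Set.Icc (-(1/2) : ℝ) (1/2),
      ‖∑' j : ℕ × ℕ, ∫ k₁ in Set.Icc (-(1/2) : ℝ) (1/2),
        ∫ k₂ in Set.Icc (-(1/2) : ℝ) (1/2), K n j.1 j.2 k k₁ k₂ * φ j.1 k₁ * ψ j.2 k₂‖) :=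
    Summable.of_nonneg_of_le hG0 hGle hQs
  refine ⟨hGsum, ?_⟩
  calc (∑' n : ℕ, (1 + n : ℝ) ^ s * ∫ k in Set.Icc (-(1/2) : ℝ) (1/2),
      ‖∑' j : ℕ × ℕ, ∫ k₁ in Set.Icc (-(1/2) : ℝ) (1/2),
        ∫ k₂ in Set.Icc (-(1/2) : ℝ) (1/2), K n j.1 j.2 k k₁ k₂ * φ j.1 k₁ * ψ j.2 k₂‖)
      ≤ ∑' n : ℕ, ∑' j : ℕ × ℕ, P n j := Summable.tsum_le_tsum hGle hGsum hQs
    _ ≤ C₀ * (2 * S) * ((∑' n, a n) * (∑' n, b n)) := hQle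
    _ = C₀ * (2 * S) * (∑' n, a n) * (∑' n, b n) := by ring
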